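/- (Existence of the pile growth rate in expectation.) Let (α_k, σ_k), k ≥ 0, be an i.i.d. sequence of random jobs taking values in {1,…,s} × [0,∞) with E[σ_0] < ∞, and let H_n be the pile sequence: H_0 = 0, H_{k+1} = Ψ_{α_k,σ_k}(H_k). Then the sequence a_n = E[|H_n|_∞] is finite and subadditive (a_{m+n} ≤ a_m + a_n for all m, n), and consequently a_n/n converges as n → ∞ to the finite nonnegative limit inf_{n ≥ 1} a_n/n. -/

import Mathlib

/-- The nondecreasing rearrangement operator `R` on vectors of ℝ^s. -/
noncomputable def sortVec {s : ℕ} (v : Fin s → ℝ) : Fin s → ℝ := v ∘ Tuple.sort v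

/-- The all-ones vector `U`. -/
def Uvec (s : ℕ) : Fin s → ℝ := fun _ => 1

/-- `L(α)`: coordinate `i` is `1` if `i ≤ α` and `0` otherwise (indices 0-based,
so `α : Fin s` represents the number of requested servers `α+1 ∈ {1,…,s}`). -/
def Lvec {s : ℕ} (α : Fin s) : Fin s → ℝ := fun i => if i ≤ α then 1 else 0

/-- `S(α, W)`: coordinate `i` is `max (W^α) (W^i)`. -/
def Svec {s : ℕ} (α : Fin s) (W : Fin s → ℝ) : Fin s → ℝ := fun i => max (W α) (W i)

/-- A vector is ordered if its coordinates are nondecreasing and nonnegative. -/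
def IsOrdered {s : ℕ} (W : Fin s → ℝ) : Prop := Monotone W ∧ ∀ i, 0 ≤ W i

/-- The one-step MJSRE map `Φ_{α,σ,τ}(W) = R(S(α,W) + σ·L(α) − τ·U)⁺`. -/
noncomputable def Phi {s : ℕ} (α : Fin s) (σ τ : ℝ) (W : Fin s → ℝ) : Fin s → ℝ :=
  sortVec (fun i => max (Svec α W i + σ * Lvec α i - τ * Uvec s i) 0)

/-- The one-step pile map `Ψ_{α,σ}(W) = R(S(α,W) + σ·L(α))`. -/
noncomputable def Psi {s : ℕ} (α : Fin s) (σ : ℝ) (W : Fin s → ℝ) : Fin s → ℝ :=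
  sortVec (fun i => Svec α W i + σ * Lvec α i)

/-- Pile sequence: `H 0 = 0`, `H (k+1) = Ψ_{α_k,σ_k}(H k)`. -/
noncomputable def pileSeq {s : ℕ} (a : ℕ → Fin s) (σf : ℕ → ℝ) : ℕ → (Fin s → ℝ)
  | 0 => 0
  | k + 1 => Psi (a k) (σf k) (pileSeq a σf k)

open MeasureTheory ProbabilityTheory Filter Topology

lemma sortVec_exists_ge {s : ℕ} (v : Fin s → ℝ) (k : Fin s)
    (A : Finset (Fin s)) (hA : (k : ℕ) + 1 ≤ A.card) :
    ∃ i ∈ A, sortVec v k ≤ v i := by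
  obtain ⟨j, hjB, hkj⟩ : ∃ j ∈ A.image (Tuple.sort v).symm, k ≤ j := by
    by_contra h
    push_neg at h
    have hsub : A.image (Tuple.sort v).symm ⊆ Finset.Iio k :=
      fun j hj => Finset.mem_Iio.2 (h j hj)
    have := Finset.card_le_card hsub
    rw [Finset.card_image_of_injective _ (Equiv.injective _), Fin.card_Iio] at this
    omega
  obtain ⟨i, hiA, hij⟩ := Finset.mem_image.1 hjB
  refine ⟨i, hiA, ?_⟩
  have hvi : v i = sortVec v j := by
    simp only [sortVec, Function.comp_apply, ← hij, Equiv.apply_symm_apply]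
  rw [hvi]
  exact Tuple.monotone_sort v hkj

lemma sortVec_exists_set {s : ℕ} (v : Fin s → ℝ) (k : Fin s) :
    ∃ A : Finset (Fin s), A.card = (k : ℕ) + 1 ∧ ∀ i ∈ A, v i ≤ sortVec v k := by
  refine ⟨(Finset.Iic k).image (Tuple.sort v), ?_, ?_⟩
  · rw [Finset.card_image_of_injective _ (Equiv.injective _), Fin.card_Iic]
  · intro i hi
    obtain ⟨j, hj, rfl⟩ := Finset.mem_image.1 hi
    exact Tuple.monotone_sort v (Finset.mem_Iic.1 hj)

lemma sortVec_mono {s : ℕ} {v w : Fin s → ℝ} (h : ∀ i, v i ≤ w i) (k : Fin s) :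
    sortVec v k ≤ sortVec w k := by
  obtain ⟨A, hcard, hle⟩ := sortVec_exists_set w k
  obtain ⟨i, hiA, hvi⟩ := sortVec_exists_ge v k A (le_of_eq hcard.symm)
  exact hvi.trans ((h i).trans (hle i hiA))

lemma sortVec_add_const {s : ℕ} (v : Fin s → ℝ) (c : ℝ) (k : Fin s) :
    sortVec (fun i => v i + c) k = sortVec v k + c := by
  have h1 : Monotone ((fun i => v i + c) ∘ (Tuple.sort (fun i => v i + c))) :=
    Tuple.monotone_sort _
  have h2 : Monotone ((fun i => v i + c) ∘ (Tuple.sort v)) := by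
    intro a b hab
    simpa using Tuple.monotone_sort v hab
  have h3 := Tuple.unique_monotone h1 h2
  have hk := congrFun h3 k
  simpa [sortVec] using hk

lemma sortVec_le {s : ℕ} {v : Fin s → ℝ} {b : ℝ} (h : ∀ i, v i ≤ b) (k : Fin s) :
    sortVec v k ≤ b := h _

lemma le_sortVec {s : ℕ} {v : Fin s → ℝ} {b : ℝ} (h : ∀ i, b ≤ v i) (k : Fin s) :
    b ≤ sortVec v k := h _

lemma powersetCard_ne {s : ℕ} (k : Fin s) :
    (Finset.univ.powersetCard ((k : ℕ) + 1) : Finset (Finset (Fin s))).Nonempty := by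
  obtain ⟨A, -, hA⟩ := Finset.exists_subset_card_eq
    (s := (Finset.univ : Finset (Fin s))) (n := (k : ℕ) + 1)
    (by simp only [Finset.card_univ, Fintype.card_fin]; exact k.2)
  exact ⟨A, Finset.mem_powersetCard_univ.2 hA⟩

lemma sortVec_eq_inf' {s : ℕ} (v : Fin s → ℝ) (k : Fin s) :
    sortVec v k = (Finset.univ.powersetCard ((k : ℕ) + 1)).inf' (powersetCard_ne k)
      (fun A => if h : A.Nonempty then A.sup' h v else 0) := by
  apply le_antisymm
  · apply Finset.le_inf'
    intro A hA
    have hcard : A.card = (k : ℕ) + 1 := Finset.mem_powersetCard_univ.1 hA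
    have hne : A.Nonempty := Finset.card_pos.1 (by omega)
    rw [dif_pos hne]
    obtain ⟨i, hiA, hvi⟩ := sortVec_exists_ge v k A (le_of_eq hcard.symm)
    exact hvi.trans (Finset.le_sup' v hiA)
  · obtain ⟨A, hcard, hle⟩ := sortVec_exists_set v k
    have hA : A ∈ Finset.univ.powersetCard ((k : ℕ) + 1) :=
      Finset.mem_powersetCard_univ.2 hcard
    refine (Finset.inf'_le _ hA).trans ?_
    have hne : A.Nonempty := Finset.card_pos.1 (by omega)
    rw [dif_pos hne]
    exact Finset.sup'_le hne v hle

lemma measurable_finset_sup' {Ω ι : Type*} [MeasurableSpace Ω] (A : Finset ι) (hA : A.Nonempty)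
    (f : ι → Ω → ℝ) (hf : ∀ i, Measurable (f i)) :
    Measurable (fun ω => A.sup' hA (fun i => f i ω)) := by
  induction hA using Finset.Nonempty.cons_induction with
  | singleton i => simpa using hf i
  | cons i A hiA hne ih =>
      have : ∀ ω, (Finset.cons i A hiA).sup' (Finset.cons_nonempty hiA) (fun j => f j ω)
          = max (f i ω) (A.sup' hne (fun j => f j ω)) := fun ω => Finset.sup'_cons hne _
      simp only [this]
      exact (hf i).max ih

lemma measurable_finset_inf' {Ω ι : Type*} [MeasurableSpace Ω] (A : Finset ι) (hA : A.Nonempty)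
    (f : ι → Ω → ℝ) (hf : ∀ i, Measurable (f i)) :
    Measurable (fun ω => A.inf' hA (fun i => f i ω)) := by
  induction hA using Finset.Nonempty.cons_induction with
  | singleton i => simpa using hf i
  | cons i A hiA hne ih =>
      have : ∀ ω, (Finset.cons i A hiA).inf' (Finset.cons_nonempty hiA) (fun j => f j ω)
          = min (f i ω) (A.inf' hne (fun j => f j ω)) := fun ω => Finset.inf'_cons hne _
      simp only [this]
      exact (hf i).min ih

lemma measurable_sortVec {Ω : Type*} [MeasurableSpace Ω] {s : ℕ}
    (g : Fin s → Ω → ℝ) (hg : ∀ j, Measurable (g j)) (k : Fin s) :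
    Measurable (fun ω => sortVec (fun j => g j ω) k) := by
  simp only [sortVec_eq_inf']
  apply measurable_finset_inf' _ (powersetCard_ne k)
    (fun A ω => if h : A.Nonempty then A.sup' h (fun j => g j ω) else 0)
  intro A
  by_cases h : A.Nonempty
  · simpa [h] using measurable_finset_sup' A h g hg
  · simpa [h] using measurable_const

lemma Lvec_nonneg {s : ℕ} (α : Fin s) (j : Fin s) : 0 ≤ Lvec α j := by
  unfold Lvec; split <;> norm_num

lemma Lvec_le_one {s : ℕ} (α : Fin s) (j : Fin s) : Lvec α j ≤ 1 := by
  unfold Lvec; split <;> norm_num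

lemma Psi_nonneg {s : ℕ} (α : Fin s) {σ : ℝ} (hσ : 0 ≤ σ) {W : Fin s → ℝ}
    (hW : ∀ i, 0 ≤ W i) (i : Fin s) : 0 ≤ Psi α σ W i := by
  apply le_sortVec
  intro j
  have h1 : 0 ≤ Svec α W j := le_max_of_le_right (hW j)
  have h2 : 0 ≤ σ * Lvec α j := mul_nonneg hσ (Lvec_nonneg α j)
  linarith

lemma Psi_le {s : ℕ} (α : Fin s) {σ : ℝ} (hσ : 0 ≤ σ) {W : Fin s → ℝ} {b : ℝ}
    (hW : ∀ i, W i ≤ b) (i : Fin s) : Psi α σ W i ≤ b + σ := by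
  apply sortVec_le
  intro j
  have h1 : Svec α W j ≤ b := max_le (hW α) (hW j)
  have h2 : σ * Lvec α j ≤ σ := by
    calc σ * Lvec α j ≤ σ * 1 := mul_le_mul_of_nonneg_left (Lvec_le_one α j) hσ
    _ = σ := mul_one σ
  linarith

lemma Psi_mono {s : ℕ} (α : Fin s) (σ : ℝ) {W W' : Fin s → ℝ}
    (h : ∀ i, W i ≤ W' i) (i : Fin s) : Psi α σ W i ≤ Psi α σ W' i := by
  apply sortVec_mono
  intro j
  exact add_le_add_left (max_le_max (h α) (h j)) _

lemma Psi_add_const {s : ℕ} (α : Fin s) (σ c : ℝ) (W : Fin s → ℝ) (i : Fin s) :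
    Psi α σ (fun j => W j + c) i = Psi α σ W i + c := by
  have h : (fun j => Svec α (fun j' => W j' + c) j + σ * Lvec α j)
      = (fun j => (Svec α W j + σ * Lvec α j) + c) := by
    funext j
    simp only [Svec]
    rw [max_add_add_right]
    ring
  unfold Psi
  rw [h, sortVec_add_const]

lemma pileSeq_nonneg {s : ℕ} (a : ℕ → Fin s) (σf : ℕ → ℝ) (hσ : ∀ k, 0 ≤ σf k) :
    ∀ n i, 0 ≤ pileSeq a σf n i := by
  intro n
  induction n with
  | zero => intro i; simp [pileSeq]
  | succ n ih => exact fun i => Psi_nonneg _ (hσ n) ih i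

lemma pileSeq_le_sum {s : ℕ} (a : ℕ → Fin s) (σf : ℕ → ℝ) (hσ : ∀ k, 0 ≤ σf k) :
    ∀ n i, pileSeq a σf n i ≤ ∑ k ∈ Finset.range n, σf k := by
  intro n
  induction n with
  | zero => intro i; simp [pileSeq]
  | succ n ih =>
    intro i
    rw [Finset.sum_range_succ]
    exact Psi_le (a n) (hσ n) ih i

lemma pileSeq_shift_le {s : ℕ} (hs : 0 < s) (a : ℕ → Fin s) (σf : ℕ → ℝ) (m : ℕ) :
    ∀ n i, pileSeq a σf (m + n) i ≤
      pileSeq (fun k => a (m + k)) (fun k => σf (m + k)) n i + ⨆ j, pileSeq a σf m j := by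
  have : Nonempty (Fin s) := ⟨⟨0, hs⟩⟩
  intro n
  induction n with
  | zero =>
    intro i
    simp only [Nat.add_zero, pileSeq, Pi.zero_apply, zero_add]
    exact le_ciSup (Set.Finite.bddAbove (Set.finite_range _)) i
  | succ n ih =>
    intro i
    have h1 : pileSeq a σf (m + (n + 1)) i
        = Psi (a (m + n)) (σf (m + n)) (pileSeq a σf (m + n)) i := rfl
    rw [h1]
    calc Psi (a (m + n)) (σf (m + n)) (pileSeq a σf (m + n)) i
        ≤ Psi (a (m + n)) (σf (m + n))
            (fun j => pileSeq (fun k => a (m + k)) (fun k => σf (m + k)) n j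
              + ⨆ j, pileSeq a σf m j) i := Psi_mono _ _ ih i
      _ = Psi (a (m + n)) (σf (m + n))
            (pileSeq (fun k => a (m + k)) (fun k => σf (m + k)) n) i
              + ⨆ j, pileSeq a σf m j := Psi_add_const _ _ _ _ i
      _ = pileSeq (fun k => a (m + k)) (fun k => σf (m + k)) (n + 1) i
              + ⨆ j, pileSeq a σf m j := rfl

lemma pileSeq_congr {s : ℕ} {a a' : ℕ → Fin s} {σf σf' : ℕ → ℝ} :
    ∀ n, (∀ k, k < n → a k = a' k ∧ σf k = σf' k) →
      pileSeq a σf n = pileSeq a' σf' n := by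
  intro n
  induction n with
  | zero => intro _; rfl
  | succ n ih =>
    intro h
    have h1 := ih (fun k hk => h k (Nat.lt_succ_of_lt hk))
    have h2 := h n (Nat.lt_succ_self n)
    show Psi (a n) (σf n) _ = Psi (a' n) (σf' n) _
    rw [h1, h2.1, h2.2]

lemma measurable_pileSeq {Ω : Type*} [MeasurableSpace Ω] {s : ℕ}
    (ξ : ℕ → Ω → Fin s × ℝ) (hmeas : ∀ k, Measurable (ξ k)) :
    ∀ n i, Measurable (fun ω => pileSeq (fun k => (ξ k ω).1) (fun k => (ξ k ω).2) n i) := by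
  intro n
  induction n with
  | zero =>
    intro i
    simp only [pileSeq]
    exact measurable_const
  | succ n ih =>
    intro i
    have hα : Measurable (fun ω => (ξ n ω).1) := measurable_fst.comp (hmeas n)
    have hσm : Measurable (fun ω => (ξ n ω).2) := measurable_snd.comp (hmeas n)
    have hEval : Measurable (fun ω =>
        pileSeq (fun k => (ξ k ω).1) (fun k => (ξ k ω).2) n ((ξ n ω).1)) := by
      have heq : (fun ω => pileSeq (fun k => (ξ k ω).1) (fun k => (ξ k ω).2) n ((ξ n ω).1))
          = fun ω => ∑ aa : Fin s, if (ξ n ω).1 = aa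
              then pileSeq (fun k => (ξ k ω).1) (fun k => (ξ k ω).2) n aa else 0 := by
        funext ω
        rw [Finset.sum_ite_eq Finset.univ ((ξ n ω).1)]
        simp
      rw [heq]
      apply Finset.measurable_sum
      intro aa _
      refine Measurable.ite ?_ (ih aa) measurable_const
      exact hα (measurableSet_singleton aa)
    show Measurable (fun ω => Psi ((ξ n ω).1) ((ξ n ω).2)
        (pileSeq (fun k => (ξ k ω).1) (fun k => (ξ k ω).2) n) i)
    unfold Psi
    apply measurable_sortVec
      (fun j ω => Svec ((ξ n ω).1) (pileSeq (fun k => (ξ k ω).1) (fun k => (ξ k ω).2) n) j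
        + (ξ n ω).2 * Lvec ((ξ n ω).1) j)
    intro j
    apply Measurable.add
    · exact hEval.max (ih j)
    · apply hσm.mul
      have : (fun ω => Lvec ((ξ n ω).1) j) = fun ω => if j ≤ (ξ n ω).1 then (1:ℝ) else 0 := rfl
      rw [this]
      refine Measurable.ite ?_ measurable_const measurable_const
      exact hα (Set.toFinite {x : Fin s | j ≤ x}).measurableSet

lemma measurable_supPile {Ω : Type*} [MeasurableSpace Ω] {s : ℕ} (hs : 0 < s)
    (ξ : ℕ → Ω → Fin s × ℝ) (hmeas : ∀ k, Measurable (ξ k)) (n : ℕ) :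
    Measurable (fun ω => ⨆ i, pileSeq (fun k => (ξ k ω).1) (fun k => (ξ k ω).2) n i) := by
  have : Nonempty (Fin s) := ⟨⟨0, hs⟩⟩
  have heq : (fun ω => ⨆ i, pileSeq (fun k => (ξ k ω).1) (fun k => (ξ k ω).2) n i)
      = fun ω => Finset.univ.sup' Finset.univ_nonempty
          (fun i => pileSeq (fun k => (ξ k ω).1) (fun k => (ξ k ω).2) n i) := by
    funext ω
    rw [Finset.sup'_univ_eq_ciSup]
  rw [heq]
  exact measurable_finset_sup' _ _ _ (fun i => measurable_pileSeq ξ hmeas n i)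

lemma map_tuple_eq_pi {Ω : Type*} [MeasurableSpace Ω] (μ : Measure Ω) [IsProbabilityMeasure μ]
    {β : Type*} [MeasurableSpace β]
    (ξ : ℕ → Ω → β) (hmeas : ∀ k, Measurable (ξ k))
    (hindep : iIndepFun ξ μ) (m n : ℕ) :
    μ.map (fun ω (k : Fin n) => ξ (m + (k : ℕ)) ω)
      = Measure.pi (fun k : Fin n => μ.map (ξ (m + (k : ℕ)))) := by
  haveI : ∀ k : Fin n, IsProbabilityMeasure (μ.map (ξ (m + (k : ℕ)))) :=
    fun k => Measure.isProbabilityMeasure_map (hmeas _).aemeasurable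
  refine (Measure.pi_eq ?_).symm
  intro t ht
  have htuple : Measurable (fun ω (k : Fin n) => ξ (m + (k : ℕ)) ω) :=
    measurable_pi_lambda _ (fun k => hmeas _)
  rw [Measure.map_apply htuple (MeasurableSet.univ_pi ht)]
  have hpre : (fun ω (k : Fin n) => ξ (m + (k : ℕ)) ω) ⁻¹' (Set.univ.pi t)
      = ⋂ k : Fin n, ξ (m + (k : ℕ)) ⁻¹' t k := by
    ext ω
    simp [Set.mem_pi]
  rw [hpre]
  classical
  set S : Finset ℕ := Finset.image (fun k : Fin n => m + (k : ℕ)) Finset.univ with hS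
  set sets : ℕ → Set β := fun i => if h : m ≤ i ∧ i - m < n then t ⟨i - m, h.2⟩ else Set.univ
    with hsets_def
  have hinj : Function.Injective (fun k : Fin n => m + (k : ℕ)) := by
    intro x y h
    simp only at h
    exact Fin.ext (by omega)
  have hsets : ∀ k : Fin n, sets (m + (k : ℕ)) = t k := by
    intro k
    have h : m ≤ m + (k : ℕ) ∧ m + (k : ℕ) - m < n := ⟨Nat.le_add_right _ _, by simp [k.2]⟩
    rw [hsets_def]
    simp only [dif_pos h]
    have hfin : (⟨m + (k : ℕ) - m, h.2⟩ : Fin n) = k :=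
      Fin.ext (Nat.add_sub_cancel_left m (k : ℕ))
    rw [hfin]
  have hiInter : (⋂ k : Fin n, ξ (m + (k : ℕ)) ⁻¹' t k) = ⋂ i ∈ S, ξ i ⁻¹' sets i := by
    ext ω
    simp only [Set.mem_iInter, Set.mem_preimage]
    constructor
    · intro h i hi
      obtain ⟨k, -, rfl⟩ := Finset.mem_image.1 hi
      rw [hsets k]
      exact h k
    · intro h k
      have := h (m + (k : ℕ)) (Finset.mem_image.2 ⟨k, Finset.mem_univ _, rfl⟩)
      rwa [hsets k] at this
  have hmeasS : ∀ i, i ∈ S → MeasurableSet (sets i) := by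
    intro i _
    show MeasurableSet (if h : m ≤ i ∧ i - m < n then t ⟨i - m, h.2⟩ else Set.univ)
    split
    · exact ht _
    · exact MeasurableSet.univ
  rw [hiInter, hindep.measure_inter_preimage_eq_mul S hmeasS,
    Finset.prod_image (fun x _ y _ h => hinj h)]
  refine Finset.prod_congr rfl ?_
  intro k _
  rw [hsets k, Measure.map_apply (hmeas _) (ht k)]

/-- Existence of the pile growth rate in expectation: for i.i.d. jobs
`(α_k, σ_k) ∈ {1,…,s} × [0,∞)` with `E[σ_0] < ∞`, the sequence `a_n = E[|H_n|_∞]` is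
finite (the integrand is integrable) and subadditive, hence `a_n / n` converges to the
finite nonnegative limit `inf_{n ≥ 1} a_n / n`. -/
theorem pile_growth_rate
    {Ω : Type*} [MeasurableSpace Ω] (μ : Measure Ω) [IsProbabilityMeasure μ]
    (s : ℕ) (hs : 0 < s) (ξ : ℕ → Ω → Fin s × ℝ)
    (hmeas : ∀ k, Measurable (ξ k))
    (hindep : iIndepFun ξ μ)
    (hident : ∀ k, IdentDistrib (ξ k) (ξ 0) μ μ)
    (hσ : ∀ k ω, 0 ≤ (ξ k ω).2)
    (hint : Integrable (fun ω => (ξ 0 ω).2) μ) :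
    (∀ n : ℕ, Integrable
        (fun ω => ⨆ i, pileSeq (fun k => (ξ k ω).1) (fun k => (ξ k ω).2) n i) μ) ∧
    (∀ m n : ℕ,
        (∫ ω, (⨆ i, pileSeq (fun k => (ξ k ω).1) (fun k => (ξ k ω).2) (m + n) i) ∂μ)
          ≤ (∫ ω, (⨆ i, pileSeq (fun k => (ξ k ω).1) (fun k => (ξ k ω).2) m i) ∂μ)
            + ∫ ω, (⨆ i, pileSeq (fun k => (ξ k ω).1) (fun k => (ξ k ω).2) n i) ∂μ) ∧
    Tendsto
      (fun n : ℕ =>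
        (∫ ω, (⨆ i, pileSeq (fun k => (ξ k ω).1) (fun k => (ξ k ω).2) n i) ∂μ) / n)
      atTop
      (𝓝 (⨅ n : ℕ+,
        (∫ ω, (⨆ i, pileSeq (fun k => (ξ k ω).1) (fun k => (ξ k ω).2) n i) ∂μ) / n)) ∧
    0 ≤ ⨅ n : ℕ+,
        (∫ ω, (⨆ i, pileSeq (fun k => (ξ k ω).1) (fun k => (ξ k ω).2) n i) ∂μ) / n := by
  have hne : Nonempty (Fin s) := ⟨⟨0, hs⟩⟩
  have hbddA : ∀ (g : Fin s → ℝ), BddAbove (Set.range g) :=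
    fun g => Set.Finite.bddAbove (Set.finite_range g)
  have hfnn : ∀ (n : ℕ) (ω : Ω),
      0 ≤ ⨆ i, pileSeq (fun k => (ξ k ω).1) (fun k => (ξ k ω).2) n i :=
    fun n ω => le_trans (pileSeq_nonneg _ _ (fun k => hσ k ω) n ⟨0, hs⟩)
      (le_ciSup (hbddA _) _)
  have hfle : ∀ (n : ℕ) (ω : Ω),
      (⨆ i, pileSeq (fun k => (ξ k ω).1) (fun k => (ξ k ω).2) n i)
        ≤ ∑ k ∈ Finset.range n, (ξ k ω).2 :=
    fun n ω => ciSup_le (fun i => pileSeq_le_sum _ _ (fun k => hσ k ω) n i)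
  have hσint : ∀ k, Integrable (fun ω => (ξ k ω).2) μ := fun k =>
    (((hident k).comp measurable_snd).symm).integrable_snd hint
  have hfmeas : ∀ n, Measurable
      (fun ω => ⨆ i, pileSeq (fun k => (ξ k ω).1) (fun k => (ξ k ω).2) n i) :=
    fun n => measurable_supPile hs ξ hmeas n
  have hInt : ∀ n, Integrable
      (fun ω => ⨆ i, pileSeq (fun k => (ξ k ω).1) (fun k => (ξ k ω).2) n i) μ := by
    intro n
    refine Integrable.mono' (g := fun ω => ∑ k ∈ Finset.range n, (ξ k ω).2)
      (integrable_finset_sum _ (fun k _ => hσint k))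
      (hfmeas n).aestronglyMeasurable (Filter.Eventually.of_forall (fun ω => ?_))
    rw [Real.norm_eq_abs, abs_of_nonneg (hfnn n ω)]
    exact hfle n ω
  have hshift : ∀ m n : ℕ,
      IdentDistrib
        (fun ω => ⨆ i, pileSeq (fun k => (ξ (m + k) ω).1) (fun k => (ξ (m + k) ω).2) n i)
        (fun ω => ⨆ i, pileSeq (fun k => (ξ k ω).1) (fun k => (ξ k ω).2) n i) μ μ := by
    intro m n
    have hmap : ∀ m' : ℕ, μ.map (fun ω (k : Fin n) => ξ (m' + (k : ℕ)) ω)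
        = Measure.pi (fun _ : Fin n => μ.map (ξ 0)) := by
      intro m'
      rw [map_tuple_eq_pi μ ξ hmeas hindep m' n]
      congr 1
      funext k
      exact (hident (m' + (k : ℕ))).map_eq
    have htm : ∀ m' : ℕ, Measurable (fun ω (k : Fin n) => ξ (m' + (k : ℕ)) ω) :=
      fun m' => measurable_pi_lambda _ (fun k => hmeas _)
    have hID : IdentDistrib (fun ω (k : Fin n) => ξ (m + (k : ℕ)) ω)
        (fun ω (k : Fin n) => ξ (0 + (k : ℕ)) ω) μ μ :=
      ⟨(htm m).aemeasurable, (htm 0).aemeasurable, by rw [hmap m, hmap 0]⟩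
    have hGmeas : Measurable (fun J : Fin n → Fin s × ℝ =>
        ⨆ i, pileSeq
          (fun k => ((if h : k < n then J ⟨k, h⟩ else ((⟨0, hs⟩ : Fin s), (0:ℝ)))).1)
          (fun k => ((if h : k < n then J ⟨k, h⟩ else ((⟨0, hs⟩ : Fin s), (0:ℝ)))).2) n i) := by
      apply measurable_supPile hs
        (fun k (J : Fin n → Fin s × ℝ) =>
          if h : k < n then J ⟨k, h⟩ else ((⟨0, hs⟩ : Fin s), (0:ℝ)))
      intro k
      by_cases h : k < n
      · simpa [h] using measurable_pi_apply (⟨k, h⟩ : Fin n)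
      · simpa [h] using measurable_const
    have hGeq : ∀ (m' : ℕ) (J : ℕ → Fin s × ℝ),
        (⨆ i, pileSeq
          (fun k => ((if h : k < n then (fun kk : Fin n => J (m' + (kk : ℕ))) ⟨k, h⟩
              else ((⟨0, hs⟩ : Fin s), (0:ℝ)))).1)
          (fun k => ((if h : k < n then (fun kk : Fin n => J (m' + (kk : ℕ))) ⟨k, h⟩
              else ((⟨0, hs⟩ : Fin s), (0:ℝ)))).2) n i)
        = ⨆ i, pileSeq (fun k => (J (m' + k)).1) (fun k => (J (m' + k)).2) n i := by
      intro m' J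
      have hc := pileSeq_congr (n := n)
        (a := fun k => ((if h : k < n then (fun kk : Fin n => J (m' + (kk : ℕ))) ⟨k, h⟩
            else ((⟨0, hs⟩ : Fin s), (0:ℝ)))).1)
        (a' := fun k => (J (m' + k)).1)
        (σf := fun k => ((if h : k < n then (fun kk : Fin n => J (m' + (kk : ℕ))) ⟨k, h⟩
            else ((⟨0, hs⟩ : Fin s), (0:ℝ)))).2)
        (σf' := fun k => (J (m' + k)).2)
        (fun k hk => by simp [dif_pos hk])
      rw [hc]
    have hID2 := hID.comp hGmeas
    refine ⟨?_, (hfmeas n).aemeasurable, ?_⟩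
    · exact (measurable_supPile hs (fun k => ξ (m + k)) (fun k => hmeas _) n).aemeasurable
    · have h1 : μ.map (fun ω => ⨆ i, pileSeq (fun k => (ξ (m + k) ω).1)
          (fun k => (ξ (m + k) ω).2) n i)
          = μ.map ((fun J : Fin n → Fin s × ℝ =>
            ⨆ i, pileSeq
              (fun k => ((if h : k < n then J ⟨k, h⟩ else ((⟨0, hs⟩ : Fin s), (0:ℝ)))).1)
              (fun k => ((if h : k < n then J ⟨k, h⟩ else ((⟨0, hs⟩ : Fin s), (0:ℝ)))).2) n i)
            ∘ (fun ω (k : Fin n) => ξ (m + (k : ℕ)) ω)) := by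
        congr 1
        funext ω
        exact (hGeq m (fun j => ξ j ω)).symm
      rw [h1, hID2.map_eq]
      congr 1
      funext ω
      exact (hGeq 0 (fun j => ξ j ω)).trans (by simp only [Nat.zero_add])
  have hshiftInt : ∀ m n : ℕ, Integrable
      (fun ω => ⨆ i, pileSeq (fun k => (ξ (m + k) ω).1) (fun k => (ξ (m + k) ω).2) n i) μ :=
    fun m n => (hshift m n).symm.integrable_snd (hInt n)
  have hsub : ∀ m n : ℕ,
      (∫ ω, (⨆ i, pileSeq (fun k => (ξ k ω).1) (fun k => (ξ k ω).2) (m + n) i) ∂μ)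
        ≤ (∫ ω, (⨆ i, pileSeq (fun k => (ξ k ω).1) (fun k => (ξ k ω).2) m i) ∂μ)
          + ∫ ω, (⨆ i, pileSeq (fun k => (ξ k ω).1) (fun k => (ξ k ω).2) n i) ∂μ := by
    intro m n
    have hpw : ∀ ω, (⨆ i, pileSeq (fun k => (ξ k ω).1) (fun k => (ξ k ω).2) (m + n) i)
        ≤ (⨆ i, pileSeq (fun k => (ξ k ω).1) (fun k => (ξ k ω).2) m i)
          + ⨆ i, pileSeq (fun k => (ξ (m + k) ω).1) (fun k => (ξ (m + k) ω).2) n i := by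
      intro ω
      apply ciSup_le
      intro i
      calc pileSeq (fun k => (ξ k ω).1) (fun k => (ξ k ω).2) (m + n) i
          ≤ pileSeq (fun k => (ξ (m + k) ω).1) (fun k => (ξ (m + k) ω).2) n i
              + ⨆ j, pileSeq (fun k => (ξ k ω).1) (fun k => (ξ k ω).2) m j :=
            pileSeq_shift_le hs _ _ m n i
        _ ≤ (⨆ j, pileSeq (fun k => (ξ (m + k) ω).1) (fun k => (ξ (m + k) ω).2) n j)
              + ⨆ j, pileSeq (fun k => (ξ k ω).1) (fun k => (ξ k ω).2) m j :=
            add_le_add_left (le_ciSup (hbddA _) i) _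
        _ = _ := add_comm _ _
    calc (∫ ω, (⨆ i, pileSeq (fun k => (ξ k ω).1) (fun k => (ξ k ω).2) (m + n) i) ∂μ)
        ≤ ∫ ω, ((⨆ i, pileSeq (fun k => (ξ k ω).1) (fun k => (ξ k ω).2) m i)
            + ⨆ i, pileSeq (fun k => (ξ (m + k) ω).1) (fun k => (ξ (m + k) ω).2) n i) ∂μ :=
          integral_mono (hInt (m + n)) ((hInt m).add (hshiftInt m n)) hpw
      _ = (∫ ω, (⨆ i, pileSeq (fun k => (ξ k ω).1) (fun k => (ξ k ω).2) m i) ∂μ)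
            + ∫ ω, (⨆ i, pileSeq (fun k => (ξ (m + k) ω).1)
                (fun k => (ξ (m + k) ω).2) n i) ∂μ :=
          integral_add (hInt m) (hshiftInt m n)
      _ = _ := by rw [(hshift m n).integral_eq]
  have hSub : Subadditive
      (fun n : ℕ => ∫ ω, (⨆ i, pileSeq (fun k => (ξ k ω).1) (fun k => (ξ k ω).2) n i) ∂μ) :=
    fun m n => hsub m n
  have hbdd : BddBelow (Set.range fun n : ℕ =>
      (∫ ω, (⨆ i, pileSeq (fun k => (ξ k ω).1) (fun k => (ξ k ω).2) n i) ∂μ) / n) := by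
    refine ⟨0, ?_⟩
    rintro x ⟨n, rfl⟩
    exact div_nonneg (integral_nonneg (fun ω => hfnn n ω)) (Nat.cast_nonneg n)
  have hlim := hSub.tendsto_lim hbdd
  have hinf_eq : hSub.lim = ⨅ n : ℕ+,
      (∫ ω, (⨆ i, pileSeq (fun k => (ξ k ω).1) (fun k => (ξ k ω).2) n i) ∂μ) / n := by
    rw [Subadditive.lim]
    have himg : ((fun n : ℕ =>
        (∫ ω, (⨆ i, pileSeq (fun k => (ξ k ω).1) (fun k => (ξ k ω).2) n i) ∂μ) / n)
          '' Set.Ici 1)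
        = Set.range (fun n : ℕ+ =>
        (∫ ω, (⨆ i, pileSeq (fun k => (ξ k ω).1) (fun k => (ξ k ω).2) n i) ∂μ) / n) := by
      ext x
      constructor
      · rintro ⟨n, hn, rfl⟩
        exact ⟨⟨n, hn⟩, rfl⟩
      · rintro ⟨n, rfl⟩
        exact ⟨(n : ℕ), n.one_le, rfl⟩
    rw [himg]
    rfl
  refine ⟨hInt, hsub, ?_, ?_⟩
  · rw [hinf_eq] at hlim
    exact hlim
  · refine le_ciInf (fun n => ?_)
    exact div_nonneg (integral_nonneg (fun ω => hfnn (n : ℕ) ω)) (by positivity)
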